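/- (Weakly singular discrete Gronwall inequality) Let 0 < α ≤ 1 and let {e_n}_{n=1}^N be nonnegative numbers satisfying e_n ≤ g_n + C Σ_{i=1}^{n−1} ∫_{t_{i−1}}^{t_i} (t_n − τ)^{α−1} dτ · e_i for a partition 0 = t₀ < t₁ < ⋯ < t_N = T and nonnegative g_n. Then there is a constant C' depending only on C, α, T such that e_n ≤ C' max_{1≤i≤n} g_i for all n. -/

import Mathlib

open Real intervalIntegral Finset

lemma integral_formula {α : ℝ} (hα : 0 < α) (a b c : ℝ) :
    (∫ τ in a..b, (c - τ) ^ (α - 1)) = ((c - a) ^ α - (c - b) ^ α) / α := by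
  rw [intervalIntegral.integral_comp_sub_left (fun x => x ^ (α - 1)) c,
    integral_rpow (Or.inl (by linarith)), sub_add_cancel]

lemma far_bound {α : ℝ} (hα : 0 < α) (hα1 : α ≤ 1) {δ x y : ℝ} (hδ : 0 < δ)
    (h1 : δ ≤ y) (h2 : y ≤ x) : x ^ α - y ^ α ≤ α * δ ^ (α - 1) * (x - y) := by
  have hint : (∫ u in y..x, u ^ (α - 1)) = (x ^ α - y ^ α) / α := by
    rw [integral_rpow (Or.inl (by linarith)), sub_add_cancel]
  have hmono : (∫ u in y..x, u ^ (α - 1)) ≤ ∫ _ in y..x, δ ^ (α - 1) := by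
    apply intervalIntegral.integral_mono_on h2
    · exact intervalIntegrable_rpow' (by linarith)
    · exact intervalIntegrable_const
    · intro u hu
      exact Real.rpow_le_rpow_of_nonpos hδ (le_trans h1 hu.1) (by linarith)
  rw [hint, intervalIntegral.integral_const, smul_eq_mul] at hmono
  have := (div_le_iff₀ hα).mp hmono
  nlinarith

lemma myDivHelper {α X D Z d s : ℝ} (hα : 0 < α) (h : X - D ≤ α * (d * s)) :
    (X - Z) / α ≤ d * s + (D - Z) / α := by
  have h2 : (X - D) / α ≤ d * s := by
    rw [div_le_iff₀ hα]
    calc X - D ≤ α * (d * s) := h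
    _ = d * s * α := by ring
  have h3 : (X - Z) / α = (X - D) / α + (D - Z) / α := by ring
  linarith

lemma interval_split {α : ℝ} (hα : 0 < α) (hα1 : α ≤ 1) {δ a b c : ℝ} (hδ : 0 < δ)
    (hab : a ≤ b) :
    ((c - a) ^ α - (c - b) ^ α) / α ≤
      δ ^ (α - 1) * (b - a) +
      ((c - max a (c - δ)) ^ α - (c - max b (c - δ)) ^ α) / α := by
  have hd0 : (0:ℝ) ≤ δ ^ (α - 1) := Real.rpow_nonneg hδ.le _
  rcases le_or_gt b (c - δ) with hb | hb
  · rw [max_eq_right (le_trans hab hb), max_eq_right hb]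
    have h := far_bound hα hα1 hδ (show δ ≤ c - b by linarith)
      (show c - b ≤ c - a by linarith)
    rw [sub_self, zero_div, add_zero, div_le_iff₀ hα]
    nlinarith [h]
  · rw [max_eq_left hb.le]
    rcases le_or_gt a (c - δ) with ha | ha
    · rw [max_eq_right ha, sub_sub_cancel]
      have h := far_bound hα hα1 hδ (le_refl δ) (show δ ≤ c - a by linarith)
      apply myDivHelper hα
      have h2 : α * δ ^ (α - 1) * (c - a - δ) ≤ α * δ ^ (α - 1) * (b - a) := by
        apply mul_le_mul_of_nonneg_left (by linarith) (by positivity)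
      calc (c - a) ^ α - δ ^ α ≤ α * δ ^ (α - 1) * (b - a) := le_trans h h2
        _ = α * (δ ^ (α - 1) * (b - a)) := by ring
    · rw [max_eq_left ha.le]
      have : 0 ≤ δ ^ (α - 1) * (b - a) := mul_nonneg hd0 (by linarith)
      linarith

lemma tel (f : ℕ → ℝ) (m : ℕ) :
    ∑ i ∈ Finset.Icc 1 m, (f (i - 1) - f i) = f 0 - f m := by
  induction m with
  | zero => simp
  | succ k ihk =>
    rw [Finset.sum_Icc_succ_top (Nat.one_le_iff_ne_zero.mpr (Nat.succ_ne_zero k))]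
    simp only [Nat.add_sub_cancel, ihk]
    ring

lemma tel2 (f : ℕ → ℝ) (m : ℕ) :
    ∑ i ∈ Finset.Icc 1 m, (f (i + 1) - f i) = f (m + 1) - f 1 := by
  induction m with
  | zero => simp
  | succ k ihk =>
    rw [Finset.sum_Icc_succ_top (Nat.one_le_iff_ne_zero.mpr (Nat.succ_ne_zero k)), ihk]
    ring

set_option maxHeartbeats 1000000 in
/-- Weakly singular discrete Gronwall inequality (Dixon–McKee). -/
theorem discrete_gronwall_weakly_singular (α C T : ℝ)
    (hα : 0 < α) (hα1 : α ≤ 1) (hC : 0 < C) (hT : 0 < T) :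
    ∃ C' > 0, ∀ (N : ℕ) (t : ℕ → ℝ) (e g : ℕ → ℝ),
      1 ≤ N →
      t 0 = 0 → t N = T → StrictMonoOn t (Set.Iic N) →
      (∀ n, 1 ≤ n → n ≤ N → 0 ≤ e n) →
      (∀ n, 1 ≤ n → n ≤ N → 0 ≤ g n) →
      (∀ n, 1 ≤ n → n ≤ N →
        e n ≤ g n + C * ∑ i ∈ Finset.Icc 1 (n - 1),
          (∫ τ in t (i - 1)..t i, (t n - τ) ^ (α - 1)) * e i) →
      ∀ n, 1 ≤ n → n ≤ N →
        ∀ G : ℝ, (∀ i, 1 ≤ i → i ≤ n → g i ≤ G) → e n ≤ C' * G := by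
  set δ : ℝ := (α / (2 * C)) ^ (1 / α) with hδdef
  have hδ : 0 < δ := Real.rpow_pos_of_pos (by positivity) _
  have hδα : δ ^ α = α / (2 * C) := by
    rw [hδdef, one_div, Real.rpow_inv_rpow (by positivity) hα.ne']
  set c₁ : ℝ := C * δ ^ (α - 1) with hc₁def
  have hc₁ : 0 ≤ c₁ := mul_nonneg hC.le (Real.rpow_nonneg hδ.le _)
  refine ⟨2 * Real.exp (2 * c₁ * T), by positivity, ?_⟩
  intro N t e g hN ht0 htN htmono he hg hrec n₀ hn₀1 hn₀N G hG
  have hG0 : 0 ≤ G := le_trans (hg n₀ hn₀1 hn₀N) (hG n₀ hn₀1 le_rfl)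
  have htm : ∀ i j : ℕ, i ≤ j → j ≤ N → t i ≤ t j := fun i j hij hjN =>
    htmono.monotoneOn (Set.mem_Iic.mpr (le_trans hij hjN)) (Set.mem_Iic.mpr hjN) hij
  have htΔ : ∀ i : ℕ, 1 ≤ i → i ≤ N → t (i - 1) < t i := fun i h1 h2 =>
    htmono (Set.mem_Iic.mpr (le_trans (Nat.sub_le i 1) h2)) (Set.mem_Iic.mpr h2)
      (Nat.sub_lt (by omega) one_pos)
  set P : ℕ → ℝ := fun m => ∏ i ∈ Finset.Icc 1 (m - 1), (1 + 2 * c₁ * (t i - t (i - 1)))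
    with hPdef
  have hP0 : P 0 = 1 := by simp [hPdef]
  have hP1 : P 1 = 1 := by simp [hPdef]
  have hPstep : ∀ i : ℕ, 1 ≤ i → P (i + 1) = P i * (1 + 2 * c₁ * (t i - t (i - 1))) := by
    intro i hi
    obtain ⟨j, rfl⟩ : ∃ j, i = j + 1 := ⟨i - 1, by omega⟩
    simp only [hPdef, Nat.add_sub_cancel]
    exact Finset.prod_Icc_succ_top (by omega) _
  have hfac : ∀ i : ℕ, 1 ≤ i → i ≤ N → 1 ≤ 1 + 2 * c₁ * (t i - t (i - 1)) := by
    intro i h1 h2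
    have h3 : 0 ≤ t i - t (i - 1) := (sub_pos.mpr (htΔ i h1 h2)).le
    nlinarith
  have hPge : ∀ m, m ≤ N → 1 ≤ P m := by
    intro m
    induction m with
    | zero => intro _; rw [hP0]
    | succ k ihk =>
      intro hkN
      rcases Nat.eq_zero_or_pos k with rfl | hk
      · rw [hP1]
      · rw [hPstep k hk]
        have h1 : 1 ≤ P k := ihk (by omega)
        have hf := hfac k hk (by omega)
        nlinarith
  have hPmono : ∀ m k, m ≤ k → k ≤ N → P m ≤ P k := by
    intro m k hmk
    induction k, hmk using Nat.le_induction with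
    | base => intro _; exact le_refl _
    | succ j hmj ihj =>
      intro hjN
      have h1 : P m ≤ P j := ihj (by omega)
      rcases Nat.eq_zero_or_pos j with rfl | hj
      · rw [show (0:ℕ) + 1 = 1 from rfl, hP1]; rw [hP0] at h1; exact h1
      · rw [hPstep j hj]
        have hf := hfac j hj (by omega)
        have h3 : 0 ≤ P j := le_trans zero_le_one (hPge j (by omega))
        nlinarith
  -- main induction
  have key : ∀ n, 1 ≤ n → n ≤ N → (∀ i, 1 ≤ i → i ≤ n → g i ≤ G) → e n ≤ 2 * G * P n := by
    intro n
    induction n using Nat.strong_induction_on with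
    | _ n ih =>
      intro hn1 hnN hGn
      set f : ℕ → ℝ := fun j => (t n - max (t j) (t n - δ)) ^ α / α with hfdef
      have h2GP : 0 ≤ 2 * G * P (n - 1) := by
        have := hPge (n - 1) (by omega); nlinarith
      have hterm : ∀ i ∈ Finset.Icc 1 (n - 1),
          (∫ τ in t (i - 1)..t i, (t n - τ) ^ (α - 1)) * e i ≤
            δ ^ (α - 1) * (t i - t (i - 1)) * (2 * G * P i)
              + (f (i - 1) - f i) * (2 * G * P (n - 1)) := by
        intro i hi
        rw [Finset.mem_Icc] at hi
        obtain ⟨hi1, hi2⟩ := hi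
        have hiN : i ≤ N := by omega
        have hin : i < n := by omega
        have hab : t (i - 1) ≤ t i := (htΔ i hi1 hiN).le
        have htin : t i ≤ t n := htm i n (by omega) hnN
        rw [integral_formula hα]
        have hK := interval_split hα hα1 hδ hab (c := t n)
        have hei0 : 0 ≤ e i := he i hi1 hiN
        have heiP : e i ≤ 2 * G * P i := ih i hin hi1 hiN
          (fun j hj1 hj2 => hGn j hj1 (by omega))
        have hPin : P i ≤ P (n - 1) := hPmono i (n - 1) (by omega) (by omega)
        have heiP' : e i ≤ 2 * G * P (n - 1) := le_trans heiP (by nlinarith)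
        have hfsub : f (i - 1) - f i =
            ((t n - max (t (i - 1)) (t n - δ)) ^ α - (t n - max (t i) (t n - δ)) ^ α) / α := by
          simp only [hfdef]; rw [div_sub_div_same]
        have hJ0 : 0 ≤ f (i - 1) - f i := by
          rw [hfsub]
          apply div_nonneg _ hα.le
          have hb2 : 0 ≤ t n - max (t i) (t n - δ) := by
            have : max (t i) (t n - δ) ≤ t n := max_le htin (by linarith)
            linarith
          have hb12 : t n - max (t i) (t n - δ) ≤ t n - max (t (i - 1)) (t n - δ) := by
            have : max (t (i - 1)) (t n - δ) ≤ max (t i) (t n - δ) :=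
              max_le_max hab (le_refl _)
            linarith
          linarith [Real.rpow_le_rpow hb2 hb12 hα.le]
        have hA0 : 0 ≤ δ ^ (α - 1) * (t i - t (i - 1)) :=
          mul_nonneg (Real.rpow_nonneg hδ.le _) (by linarith)
        calc ((t n - t (i - 1)) ^ α - (t n - t i) ^ α) / α * e i
            ≤ (δ ^ (α - 1) * (t i - t (i - 1)) + (f (i - 1) - f i)) * e i := by
              apply mul_le_mul_of_nonneg_right _ hei0
              rw [hfsub]; exact hK
          _ = δ ^ (α - 1) * (t i - t (i - 1)) * e i + (f (i - 1) - f i) * e i := by ring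
          _ ≤ _ := add_le_add
              (mul_le_mul_of_nonneg_left heiP hA0)
              (mul_le_mul_of_nonneg_left heiP' hJ0)
      have hsum : (∑ i ∈ Finset.Icc 1 (n - 1),
            (∫ τ in t (i - 1)..t i, (t n - τ) ^ (α - 1)) * e i)
          ≤ (∑ i ∈ Finset.Icc 1 (n - 1), δ ^ (α - 1) * (t i - t (i - 1)) * (2 * G * P i))
            + (f 0 - f (n - 1)) * (2 * G * P (n - 1)) := by
        calc _ ≤ ∑ i ∈ Finset.Icc 1 (n - 1),
              (δ ^ (α - 1) * (t i - t (i - 1)) * (2 * G * P i)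
                + (f (i - 1) - f i) * (2 * G * P (n - 1))) := Finset.sum_le_sum hterm
          _ = _ := by rw [Finset.sum_add_distrib, ← Finset.sum_mul, tel f (n - 1)]
      have hCS1 : C * (∑ i ∈ Finset.Icc 1 (n - 1),
          δ ^ (α - 1) * (t i - t (i - 1)) * (2 * G * P i)) = G * (P n - 1) := by
        rw [Finset.mul_sum]
        have hcongr : ∀ i ∈ Finset.Icc 1 (n - 1),
            C * (δ ^ (α - 1) * (t i - t (i - 1)) * (2 * G * P i)) = G * (P (i + 1) - P i) := by
          intro i hi
          rw [Finset.mem_Icc] at hi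
          rw [hPstep i hi.1, hc₁def]
          ring
        rw [Finset.sum_congr rfl hcongr, ← Finset.mul_sum, tel2 P (n - 1),
          show n - 1 + 1 = n by omega, hP1]
      have hf0 : C * f 0 ≤ 1 / 2 := by
        have hb : t n - max (t 0) (t n - δ) ≤ δ := by
          have : t n - δ ≤ max (t 0) (t n - δ) := le_max_right _ _
          linarith
        have hb0 : 0 ≤ t n - max (t 0) (t n - δ) := by
          have h01 : t 0 ≤ t n := htm 0 n (by omega) hnN
          have : max (t 0) (t n - δ) ≤ t n := max_le h01 (by linarith)
          linarith
        have hr : (t n - max (t 0) (t n - δ)) ^ α ≤ δ ^ α := Real.rpow_le_rpow hb0 hb hα.le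
        have hfle : f 0 ≤ δ ^ α / α := by
          simp only [hfdef]
          gcongr
        calc C * f 0 ≤ C * (δ ^ α / α) := mul_le_mul_of_nonneg_left hfle hC.le
          _ = 1 / 2 := by rw [hδα]; field_simp
      have hf1 : 0 ≤ f (n - 1) := by
        simp only [hfdef]
        apply div_nonneg _ hα.le
        apply Real.rpow_nonneg
        have : max (t (n - 1)) (t n - δ) ≤ t n :=
          max_le (htm (n - 1) n (by omega) hnN) (by linarith)
        linarith
      have hCS : C * (∑ i ∈ Finset.Icc 1 (n - 1),
          (∫ τ in t (i - 1)..t i, (t n - τ) ^ (α - 1)) * e i)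
            ≤ G * (P n - 1) + G * P (n - 1) := by
        calc C * (∑ i ∈ Finset.Icc 1 (n - 1),
              (∫ τ in t (i - 1)..t i, (t n - τ) ^ (α - 1)) * e i)
            ≤ C * ((∑ i ∈ Finset.Icc 1 (n - 1),
                δ ^ (α - 1) * (t i - t (i - 1)) * (2 * G * P i))
              + (f 0 - f (n - 1)) * (2 * G * P (n - 1))) :=
              mul_le_mul_of_nonneg_left hsum hC.le
          _ = C * (∑ i ∈ Finset.Icc 1 (n - 1),
                δ ^ (α - 1) * (t i - t (i - 1)) * (2 * G * P i))
              + (C * (f 0 - f (n - 1))) * (2 * G * P (n - 1)) := by ring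
          _ ≤ G * (P n - 1) + (1 / 2) * (2 * G * P (n - 1)) := by
              rw [hCS1]
              have : C * (f 0 - f (n - 1)) ≤ 1 / 2 := by nlinarith
              exact add_le_add le_rfl (mul_le_mul_of_nonneg_right this h2GP)
          _ = G * (P n - 1) + G * P (n - 1) := by ring
      have hrecn := hrec n hn1 hnN
      have hgn : g n ≤ G := hGn n hn1 le_rfl
      have hPn : P (n - 1) ≤ P n := hPmono (n - 1) n (by omega) hnN
      have hGP : G * P (n - 1) ≤ G * P n := mul_le_mul_of_nonneg_left hPn hG0
      linarith
  have hfin := key n₀ hn₀1 hn₀N hG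
  have hPle : P n₀ ≤ Real.exp (2 * c₁ * T) := by
    calc P n₀ ≤ ∏ i ∈ Finset.Icc 1 (n₀ - 1), Real.exp (2 * c₁ * (t i - t (i - 1))) := by
          apply Finset.prod_le_prod
          · intro i hi
            rw [Finset.mem_Icc] at hi
            have hf := hfac i hi.1 (by omega)
            linarith
          · intro i hi
            linarith [Real.add_one_le_exp (2 * c₁ * (t i - t (i - 1)))]
      _ = Real.exp (∑ i ∈ Finset.Icc 1 (n₀ - 1), 2 * c₁ * (t i - t (i - 1))) :=
          (Real.exp_sum _ _).symm
      _ ≤ Real.exp (2 * c₁ * T) := by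
          apply Real.exp_le_exp.mpr
          have hts : ∑ i ∈ Finset.Icc 1 (n₀ - 1), 2 * c₁ * (t i - t (i - 1))
              = 2 * c₁ * (t (n₀ - 1) - t 0) := by
            rw [← Finset.mul_sum]
            congr 1
            have h := tel t (n₀ - 1)
            have h2 : ∑ i ∈ Finset.Icc 1 (n₀ - 1), (t i - t (i - 1))
                = -∑ i ∈ Finset.Icc 1 (n₀ - 1), (t (i - 1) - t i) := by
              rw [← Finset.sum_neg_distrib]
              apply Finset.sum_congr rfl
              intros; ring
            rw [h2, h]; ring
          rw [hts, ht0]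
          have h5 : t (n₀ - 1) ≤ T := htN ▸ htm (n₀ - 1) N (by omega) le_rfl
          have h6 : (0:ℝ) ≤ 2 * c₁ := by linarith
          nlinarith [mul_le_mul_of_nonneg_left (show t (n₀ - 1) - 0 ≤ T by linarith) h6]
  nlinarith [mul_le_mul_of_nonneg_left hPle (by positivity : (0:ℝ) ≤ 2 * G)]
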